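/- In the Resolving augmented game for Coin Toss (alternative payoffs 0 for Heads and 1/2 for Tails), the blueprint strategy of Player 2 (Heads 1/2, Tails 1/4, Forfeit 1/4) is part of a Nash equilibrium of the augmented game, even though the Forfeit action is strictly dominated in the subgame. -/
import Mathlib


/-- Player 2's value (= player 1's best-response payoff) in the Resolving
augmented game for Coin Toss when player 2 plays Heads, Tails, Forfeit in the
subgame with probabilities `h, t, f`. Chance reaches the Heads root in
proportion `3/4` and the Tails root in proportion `1/2` (normalized `3/5, 2/5`);
the alternative payoffs are `0` (Heads) and `1/2` (Tails); player 1's entering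
values are `-h + t + f` (Heads) and `h - t + f` (Tails). -/
noncomputable def augU (h t f : ℝ) : ℝ :=
  (3/5) * max 0 (-h + t + f) + (2/5) * max (1/2) (h - t + f)

/-- In the Resolving augmented game for Coin Toss (alternative payoffs `0` for
Heads and `1/2` for Tails), the blueprint strategy of Player 2
(Heads `1/2`, Tails `1/4`, Forfeit `1/4`) makes player 1's entering values equal
to the alternative payoffs (`0` for Heads, `1/2` for Tails) and minimizes the
augmented-game value over all player-2 subgame strategies — hence it is part of
a Nash equilibrium of the augmented game — even though Forfeit is strictly
dominated in the subgame (the mixture ½·Heads + ½·Tails gives player 1 payoff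
`0 < 1` from both coin states). -/
theorem blueprint_is_nash_in_resolve_augmented_game :
    (-(1/2 : ℝ) + 1/4 + 1/4 = 0) ∧
    ((1/2 : ℝ) - 1/4 + 1/4 = 1/2) ∧
    (∀ h t f : ℝ, 0 ≤ h → 0 ≤ t → 0 ≤ f → h + t + f = 1 →
      augU (1/2) (1/4) (1/4) ≤ augU h t f) ∧
    ((1/2 : ℝ) * (-1) + (1/2) * 1 < 1 ∧ (1/2 : ℝ) * 1 + (1/2) * (-1) < 1) := by
  refine ⟨by norm_num, by norm_num, ?_, by norm_num, by norm_num⟩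
  intro h t f _ _ _ _
  have hb : augU (1/2) (1/4) (1/4) = 1/5 := by
    unfold augU; norm_num
  rw [hb]
  unfold augU
  have h1 : (0:ℝ) ≤ max 0 (-h + t + f) := le_max_left _ _
  have h2 : (1/2:ℝ) ≤ max (1/2) (h - t + f) := le_max_left _ _
  nlinarith
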